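/- Let C ≠ 0 and α ∈ ℝ. Suppose either (even case) q = 0, k ≥ 2 is an integer, a₀, a_n⁺, a_n⁻ ∈ ℂ for n = 1,…,k−1, and ψ = Σ_{n=1}^{k−1}(a_n⁺ e_{n,k−n} + a_n⁻ e_{−n,k−n}) + a₀ e_{0,k}; or (odd case) q = −1, k ≥ 2, a_n⁺, a_n⁻ ∈ ℂ for n = 0,…,k−2, and ψ = Σ_{n=0}^{k−2}(a_n⁺ e_{n,−(k−n)} + a_n⁻ e_{−(n+1),−(k−n)}). Then H_{S¹}ψ is a trigonometric polynomial whose restriction to θ₂ = 0 satisfies, for all θ, (H_{S¹}ψ)(θ, 0) = (2/C)·(−i d/dθ)²[ψ(·,0)](θ) − 2α cos(θ)·ψ(θ, 0), where ψ(·,0) denotes the trigonometric polynomial θ ↦ ψ(θ,0); that is, the restricted action of H_{S¹} is the Mathieu operator (2/C)(−i d/dθ)² − 2α cos θ. -/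

import Mathlib

noncomputable section

/-- Fourier coefficient model of `L²((ℝ/2πℤ)²)`: trigonometric polynomials and more
general elements are described by their coefficient families `c : ℤ×ℤ → ℂ`,
`c ↔ Σ c(n,m) e^{i(nθ₁+mθ₂)}`. -/
abbrev Coef := (ℤ × ℤ) → ℂ

/-- The projection `P¹_M` (restriction of the first Fourier index to `M`). -/
def proj1 (S : ℤ → Prop) [DecidablePred S] (c : Coef) : Coef := fun p =>
  if S p.1 then c p else 0

/-- The projection `P²_M` (restriction of the second Fourier index to `M`). -/
def proj2 (S : ℤ → Prop) [DecidablePred S] (c : Coef) : Coef := fun p =>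
  if S p.2 then c p else 0

/-- Multiplication by `e^{i(aθ₁+bθ₂)}`, i.e. the shift of Fourier coefficients. -/
def Emul (a b : ℤ) (c : Coef) : Coef := fun p => c (p.1 - a, p.2 - b)

/-- `A₀ = E_{1,1}P¹_{(−∞,−1]} + E_{−1,1}P¹_{[1,∞)}`. -/
def opA0 (c : Coef) : Coef :=
  Emul 1 1 (proj1 (fun n => n ≤ -1) c) + Emul (-1) 1 (proj1 (fun n => 1 ≤ n) c)

/-- `A₊ = E_{−1,−1}P¹_{(−∞,0]} + E_{−1,1}P¹_{[1,∞)} + E_{1,1}P¹_{(−∞,−1]} + E_{1,−1}P¹_{[0,∞)}`. -/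
def opAplus (c : Coef) : Coef :=
  Emul (-1) (-1) (proj1 (fun n => n ≤ 0) c) + Emul (-1) 1 (proj1 (fun n => 1 ≤ n) c)
    + Emul 1 1 (proj1 (fun n => n ≤ -1) c) + Emul 1 (-1) (proj1 (fun n => 0 ≤ n) c)

/-- `A₋₁ = E_{1,−1}P¹_{(−∞,−2]} + E_{1,0}P¹_{{−1}} + E_{−1,0}P¹_{{0}} + E_{−1,−1}P¹_{[1,∞)}`. -/
def opAm1 (c : Coef) : Coef :=
  Emul 1 (-1) (proj1 (fun n => n ≤ -2) c) + Emul 1 0 (proj1 (fun n => n = -1) c)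
    + Emul (-1) 0 (proj1 (fun n => n = 0) c) + Emul (-1) (-1) (proj1 (fun n => 1 ≤ n) c)

/-- `A₋ = E_{−1,1}P¹_{(−∞,−1]} + E_{−1,0}P¹_{{0}} + E_{−1,−1}P¹_{[1,∞)}
       + E_{1,−1}P¹_{(−∞,−2]} + E_{1,0}P¹_{{−1}} + E_{1,1}P¹_{[0,∞)}`. -/
def opAminus (c : Coef) : Coef :=
  Emul (-1) 1 (proj1 (fun n => n ≤ -1) c) + Emul (-1) 0 (proj1 (fun n => n = 0) c)
    + Emul (-1) (-1) (proj1 (fun n => 1 ≤ n) c) + Emul 1 (-1) (proj1 (fun n => n ≤ -2) c)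
    + Emul 1 0 (proj1 (fun n => n = -1) c) + Emul 1 1 (proj1 (fun n => 0 ≤ n) c)

/-- The tunneling operator
`H_{S¹,T} = A₀ P²_{{0}} + A₊ P²_{[1,∞)} + A₋₁ P²_{{−1}} + A₋ P²_{(−∞,−2]}`. -/
def tunnelS1 (c : Coef) : Coef :=
  opA0 (proj2 (fun m => m = 0) c) + opAplus (proj2 (fun m => 1 ≤ m) c)
    + opAm1 (proj2 (fun m => m = -1) c) + opAminus (proj2 (fun m => m ≤ -2) c)

/-- Fourier coefficient of the single exponential `e_{n,m}(θ₁,θ₂) = e^{i(nθ₁+mθ₂)}`. -/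
def cdelta (n m : ℤ) : Coef := fun p => if p = (n, m) then 1 else 0

/-- The trigonometric polynomial with coefficients `c`, as a function of `(θ₁, θ₂)`. -/
def realize (c : Coef) (θ₁ θ₂ : ℝ) : ℂ :=
  ∑ᶠ p : ℤ × ℤ, c p * Complex.exp (Complex.I * ((p.1 : ℂ) * (θ₁ : ℂ) + (p.2 : ℂ) * (θ₂ : ℂ)))

/-- The kinetic part: `e_{n,m} ↦ (1/(2C))(2n+q)² e_{n,m}` if `m ≥ 0`,
`e_{n,m} ↦ (1/(2C))(2n+1+q)² e_{n,m}` if `m ≤ −1`. -/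
def kinS1 (C q : ℝ) (c : Coef) : Coef := fun p =>
  if 0 ≤ p.2 then ((1 / (2 * C) * (2 * (p.1 : ℝ) + q) ^ 2 : ℝ) : ℂ) * c p
  else ((1 / (2 * C) * (2 * (p.1 : ℝ) + 1 + q) ^ 2 : ℝ) : ℂ) * c p

/-- The Josephson junction Hamiltonian
`H_{S¹} = (1/(2C))(−2i∂_{θ₁}+q)² P²_{[0,∞)} + (1/(2C))(−2i∂_{θ₁}+1+q)² P²_{(−∞,−1]} − α H_{S¹,T}`. -/
def hamS1 (C q α : ℝ) (c : Coef) : Coef := kinS1 C q c - (α : ℂ) • tunnelS1 c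

/-- The first-order differential operator `−i d/dθ`. -/
def Mop (g : ℝ → ℂ) : ℝ → ℂ := fun t => -Complex.I * deriv g t

/-- The fiber vector of `L_{2k}` with `a_k^± = 0` (even case). -/
def evenPsi (k : ℤ) (a0 : ℂ) (ap am : ℤ → ℂ) : Coef :=
  (∑ n ∈ Finset.Icc (1 : ℤ) (k - 1), ap n • cdelta n (k - n))
    + (∑ n ∈ Finset.Icc (1 : ℤ) (k - 1), am n • cdelta (-n) (k - n))
    + a0 • cdelta 0 k

/-- The fiber vector of `L_{2k−1}` with `a_{k−1}^± = 0` (odd case). -/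
def oddPsi (k : ℤ) (ap am : ℤ → ℂ) : Coef :=
  ∑ n ∈ Finset.Icc (0 : ℤ) (k - 2),
    (ap n • cdelta n (n - k) + am n • cdelta (-(n + 1)) (n - k))
open Complex Finset

/-- `Cexp n θ = e^{inθ}`. -/
def Cexp (n : ℤ) (θ : ℝ) : ℂ := Complex.exp (Complex.I * (n : ℂ) * (θ : ℂ))

/-- Finitely supported coefficient families. -/
def FS (c : Coef) : Prop := (Function.support c).Finite

lemma FS_cdelta (n m : ℤ) : FS (cdelta n m) := by
  apply Set.Finite.subset (Set.finite_singleton ((n, m) : ℤ × ℤ))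
  intro p hp
  simp only [Function.mem_support, cdelta] at hp
  by_contra h
  simp only [Set.mem_singleton_iff] at h
  exact hp (if_neg h)

lemma FS_add {c c' : Coef} (h : FS c) (h' : FS c') : FS (c + c') :=
  (h.union h').subset (Function.support_add _ _)

lemma FS_smul (a : ℂ) {c : Coef} (h : FS c) : FS (a • c) :=
  h.subset (Function.support_smul_subset_right _ _)

lemma FS_neg {c : Coef} (h : FS c) : FS (-c) := by
  have : (-c) = (-1 : ℂ) • c := by funext p; simp
  rw [this]; exact FS_smul _ h

lemma FS_sub {c c' : Coef} (h : FS c) (h' : FS c') : FS (c - c') := by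
  rw [sub_eq_add_neg]; exact FS_add h (FS_neg h')

lemma FS_sum {ι : Type*} (s : Finset ι) (f : ι → Coef) (h : ∀ i ∈ s, FS (f i)) :
    FS (∑ i ∈ s, f i) := by
  classical
  induction s using Finset.induction with
  | empty => simpa [FS] using Set.finite_empty
  | insert _ _ hx ih =>
    rw [Finset.sum_insert hx]
    exact FS_add (h _ (Finset.mem_insert_self _ _))
      (ih fun i hi => h i (Finset.mem_insert_of_mem hi))

lemma realize_cdelta (n m : ℤ) (θ₁ θ₂ : ℝ) :
    realize (cdelta n m) θ₁ θ₂
      = Complex.exp (Complex.I * ((n : ℂ) * θ₁ + (m : ℂ) * θ₂)) := by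
  rw [realize]
  rw [finsum_eq_single _ ((n, m) : ℤ × ℤ)]
  · simp [cdelta]
  · intro p hp
    simp [cdelta, if_neg hp]

lemma realize_cdelta0 (n m : ℤ) (θ : ℝ) :
    realize (cdelta n m) θ 0 = Cexp n θ := by
  rw [realize_cdelta, Cexp]
  norm_num [mul_assoc]

lemma realize_add {c c' : Coef} (h : FS c) (h' : FS c') (θ₁ θ₂ : ℝ) :
    realize (c + c') θ₁ θ₂ = realize c θ₁ θ₂ + realize c' θ₁ θ₂ := by
  rw [realize, realize, realize]
  rw [← finsum_add_distrib]
  · apply finsum_congr; intro p; simp [add_mul]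
  · exact h.subset (Function.support_mul_subset_left _ _)
  · exact h'.subset (Function.support_mul_subset_left _ _)

lemma realize_smul (a : ℂ) (c : Coef) (θ₁ θ₂ : ℝ) :
    realize (a • c) θ₁ θ₂ = a * realize c θ₁ θ₂ := by
  rw [realize, realize]
  have : (∑ᶠ p : ℤ × ℤ, (a • c) p * Complex.exp (Complex.I * ((p.1 : ℂ) * θ₁ + (p.2 : ℂ) * θ₂)))
      = ∑ᶠ p : ℤ × ℤ, a • (c p * Complex.exp (Complex.I * ((p.1 : ℂ) * θ₁ + (p.2 : ℂ) * θ₂))) := by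
    apply finsum_congr; intro p; simp [smul_eq_mul, mul_assoc]
  rw [this, ← smul_finsum, smul_eq_mul]

lemma realize_sub {c c' : Coef} (h : FS c) (h' : FS c') (θ₁ θ₂ : ℝ) :
    realize (c - c') θ₁ θ₂ = realize c θ₁ θ₂ - realize c' θ₁ θ₂ := by
  have : c - c' = c + (-1 : ℂ) • c' := by funext p; simp; ring
  rw [this, realize_add h (FS_smul _ h'), realize_smul]; ring

lemma realize_sum {ι : Type*} (s : Finset ι) (f : ι → Coef) (h : ∀ i ∈ s, FS (f i))
    (θ₁ θ₂ : ℝ) :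
    realize (∑ i ∈ s, f i) θ₁ θ₂ = ∑ i ∈ s, realize (f i) θ₁ θ₂ := by
  classical
  induction s using Finset.induction with
  | empty => simp [realize]
  | insert _ _ hx ih =>
    rename_i x s
    rw [Finset.sum_insert hx, Finset.sum_insert hx,
      realize_add (h _ (Finset.mem_insert_self _ _))
        (FS_sum _ _ fun i hi => h i (Finset.mem_insert_of_mem hi)),
      ih fun i hi => h i (Finset.mem_insert_of_mem hi)]
section OpLin
variable (S : ℤ → Prop) [DecidablePred S]

lemma proj1_add (c c' : Coef) : proj1 S (c + c') = proj1 S c + proj1 S c' := by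
  funext p; simp only [proj1, Pi.add_apply]; split <;> simp

lemma proj1_smul (a : ℂ) (c : Coef) : proj1 S (a • c) = a • proj1 S c := by
  funext p; simp only [proj1, Pi.smul_apply]; split <;> simp

lemma proj2_add (c c' : Coef) : proj2 S (c + c') = proj2 S c + proj2 S c' := by
  funext p; simp only [proj2, Pi.add_apply]; split <;> simp

lemma proj2_smul (a : ℂ) (c : Coef) : proj2 S (a • c) = a • proj2 S c := by
  funext p; simp only [proj2, Pi.smul_apply]; split <;> simp

end OpLin

lemma Emul_add (a b : ℤ) (c c' : Coef) : Emul a b (c + c') = Emul a b c + Emul a b c' := rfl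

lemma Emul_smul (a b : ℤ) (x : ℂ) (c : Coef) : Emul a b (x • c) = x • Emul a b c := rfl

lemma opA0_add (c c' : Coef) : opA0 (c + c') = opA0 c + opA0 c' := by
  simp only [opA0, proj1_add, Emul_add]; abel

lemma opA0_smul (x : ℂ) (c : Coef) : opA0 (x • c) = x • opA0 c := by
  simp only [opA0, proj1_smul, Emul_smul, smul_add]

lemma opAplus_add (c c' : Coef) : opAplus (c + c') = opAplus c + opAplus c' := by
  simp only [opAplus, proj1_add, Emul_add]; abel

lemma opAplus_smul (x : ℂ) (c : Coef) : opAplus (x • c) = x • opAplus c := by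
  simp only [opAplus, proj1_smul, Emul_smul, smul_add]

lemma opAm1_add (c c' : Coef) : opAm1 (c + c') = opAm1 c + opAm1 c' := by
  simp only [opAm1, proj1_add, Emul_add]; abel

lemma opAm1_smul (x : ℂ) (c : Coef) : opAm1 (x • c) = x • opAm1 c := by
  simp only [opAm1, proj1_smul, Emul_smul, smul_add]

lemma opAminus_add (c c' : Coef) : opAminus (c + c') = opAminus c + opAminus c' := by
  simp only [opAminus, proj1_add, Emul_add]; abel

lemma opAminus_smul (x : ℂ) (c : Coef) : opAminus (x • c) = x • opAminus c := by
  simp only [opAminus, proj1_smul, Emul_smul, smul_add]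

lemma tunnel_add (c c' : Coef) : tunnelS1 (c + c') = tunnelS1 c + tunnelS1 c' := by
  simp only [tunnelS1, proj2_add, opA0_add, opAplus_add, opAm1_add, opAminus_add]; abel

lemma tunnel_smul (x : ℂ) (c : Coef) : tunnelS1 (x • c) = x • tunnelS1 c := by
  simp only [tunnelS1, proj2_smul, opA0_smul, opAplus_smul, opAm1_smul, opAminus_smul,
    smul_add]

lemma kin_add (C q : ℝ) (c c' : Coef) : kinS1 C q (c + c') = kinS1 C q c + kinS1 C q c' := by
  funext p; simp only [kinS1, Pi.add_apply]; split <;> ring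

lemma kin_smul (C q : ℝ) (x : ℂ) (c : Coef) : kinS1 C q (x • c) = x • kinS1 C q c := by
  funext p; simp only [kinS1, Pi.smul_apply, smul_eq_mul]; split <;> ring

lemma ham_add (C q α : ℝ) (c c' : Coef) :
    hamS1 C q α (c + c') = hamS1 C q α c + hamS1 C q α c' := by
  simp only [hamS1, kin_add, tunnel_add, smul_add]; abel

lemma ham_smul (C q α : ℝ) (x : ℂ) (c : Coef) :
    hamS1 C q α (x • c) = x • hamS1 C q α c := by
  simp only [hamS1, kin_smul, tunnel_smul, smul_sub]
  rw [smul_comm (α : ℂ) x]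

lemma ham_sum {ι : Type*} (C q α : ℝ) (s : Finset ι) (f : ι → Coef) :
    hamS1 C q α (∑ i ∈ s, f i) = ∑ i ∈ s, hamS1 C q α (f i) := by
  classical
  induction s using Finset.induction with
  | empty =>
    simp only [Finset.sum_empty]
    funext p
    simp [hamS1, kinS1, tunnelS1, opA0, opAplus, opAm1, opAminus, proj1, proj2, Emul]
  | insert _ _ hx ih => rename_i x s; rw [Finset.sum_insert hx, Finset.sum_insert hx, ham_add, ih]
section DeltaAct
variable (S : ℤ → Prop) [DecidablePred S] (n m : ℤ)

lemma proj1_delta_pos (h : S n) : proj1 S (cdelta n m) = cdelta n m := by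
  funext p
  simp only [proj1, cdelta]
  split
  · rfl
  · rename_i hp
    rw [if_neg]
    intro he; rw [he] at hp; exact hp h

lemma proj1_delta_neg (h : ¬ S n) : proj1 S (cdelta n m) = 0 := by
  funext p
  simp only [proj1, cdelta, Pi.zero_apply]
  split
  · rename_i hp
    rw [if_neg]
    intro he; rw [he] at hp; exact h hp
  · rfl

lemma proj2_delta_pos (h : S m) : proj2 S (cdelta n m) = cdelta n m := by
  funext p
  simp only [proj2, cdelta]
  split
  · rfl
  · rename_i hp
    rw [if_neg]
    intro he; rw [he] at hp; exact hp h

lemma proj2_delta_neg (h : ¬ S m) : proj2 S (cdelta n m) = 0 := by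
  funext p
  simp only [proj2, cdelta, Pi.zero_apply]
  split
  · rename_i hp
    rw [if_neg]
    intro he; rw [he] at hp; exact h hp
  · rfl

lemma proj1_zero : proj1 S 0 = 0 := by
  funext p; simp [proj1]

lemma proj2_zero : proj2 S 0 = 0 := by
  funext p; simp [proj2]

end DeltaAct

lemma Emul_delta (a b n m : ℤ) : Emul a b (cdelta n m) = cdelta (n + a) (m + b) := by
  funext p
  simp only [Emul, cdelta, Prod.mk.injEq, Prod.ext_iff]
  split_ifs <;> first | rfl | (exfalso; omega)
lemma Emul_zero (a b : ℤ) : Emul a b 0 = 0 := rfl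

lemma opA0_zero : opA0 0 = 0 := by
  simp [opA0, proj1_zero, Emul_zero]

lemma opAplus_zero : opAplus 0 = 0 := by
  simp [opAplus, proj1_zero, Emul_zero]

lemma opAm1_zero : opAm1 0 = 0 := by
  simp [opAm1, proj1_zero, Emul_zero]

lemma opAminus_zero : opAminus 0 = 0 := by
  simp [opAminus, proj1_zero, Emul_zero]

/-- The tunneling operator on a basis vector, in all the cases we use:
for `m ≥ 1` or `m ≤ -2`, `tunnelS1 e_{n,m} = e_{n-1,m₁} + e_{n+1,m₂}` for some `m₁ m₂`. -/
lemma tunnel_delta_cases (n m : ℤ) (hm : 1 ≤ m ∨ m ≤ -2) :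
    ∃ m1 m2 : ℤ, tunnelS1 (cdelta n m) = cdelta (n - 1) m1 + cdelta (n + 1) m2 := by
  have h0 : proj2 (fun m' => m' = 0) (cdelta n m) = 0 := proj2_delta_neg _ _ _ (by omega)
  have hm1 : proj2 (fun m' => m' = -1) (cdelta n m) = 0 := proj2_delta_neg _ _ _ (by omega)
  rcases hm with hm | hm
  · -- m ≥ 1 : only `opAplus` acts
    have hp : proj2 (fun m' => 1 ≤ m') (cdelta n m) = cdelta n m :=
      proj2_delta_pos _ _ _ hm
    have hmm : proj2 (fun m' => m' ≤ -2) (cdelta n m) = 0 := proj2_delta_neg _ _ _ (by omega)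
    rw [tunnelS1, h0, hm1, hp, hmm, opA0_zero, opAm1_zero, opAminus_zero, opAplus]
    rcases lt_trichotomy n 0 with hn | hn | hn
    · refine ⟨m - 1, m + 1, ?_⟩
      rw [proj1_delta_pos (fun x => x ≤ 0) _ _ (by omega),
        proj1_delta_neg (fun x => 1 ≤ x) _ _ (by omega),
        proj1_delta_pos (fun x => x ≤ -1) _ _ (by omega),
        proj1_delta_neg (fun x => 0 ≤ x) _ _ (by omega),
        Emul_delta, Emul_delta, Emul_zero, Emul_zero,
        show n + -1 = n - 1 from by omega, show m + -1 = m - 1 from by omega]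
      abel
    · refine ⟨m - 1, m - 1, ?_⟩
      subst hn
      rw [proj1_delta_pos (fun x => x ≤ 0) _ _ (by omega),
        proj1_delta_neg (fun x => 1 ≤ x) _ _ (by omega),
        proj1_delta_neg (fun x => x ≤ -1) _ _ (by omega),
        proj1_delta_pos (fun x => 0 ≤ x) _ _ (by omega),
        Emul_delta, Emul_delta, Emul_zero, Emul_zero,
        show (0:ℤ) + -1 = 0 - 1 from by omega, show m + -1 = m - 1 from by omega]
      abel
    · refine ⟨m + 1, m - 1, ?_⟩
      rw [proj1_delta_neg (fun x => x ≤ 0) _ _ (by omega),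
        proj1_delta_pos (fun x => 1 ≤ x) _ _ (by omega),
        proj1_delta_neg (fun x => x ≤ -1) _ _ (by omega),
        proj1_delta_pos (fun x => 0 ≤ x) _ _ (by omega),
        Emul_delta, Emul_delta, Emul_zero, Emul_zero,
        show n + -1 = n - 1 from by omega, show m + -1 = m - 1 from by omega]
      abel
  · -- m ≤ -2 : only `opAminus` acts
    have hp : proj2 (fun m' => 1 ≤ m') (cdelta n m) = 0 := proj2_delta_neg _ _ _ (by omega)
    have hmm : proj2 (fun m' => m' ≤ -2) (cdelta n m) = cdelta n m :=
      proj2_delta_pos _ _ _ hm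
    rw [tunnelS1, h0, hm1, hp, hmm, opA0_zero, opAm1_zero, opAplus_zero, opAminus]
    rcases lt_trichotomy n 0 with hn | hn | hn
    · rcases eq_or_lt_of_le (by omega : n ≤ -1) with hn1 | hn1
      · -- n = -1
        refine ⟨m + 1, m, ?_⟩
        rw [proj1_delta_pos (fun x => x ≤ -1) _ _ (by omega),
          proj1_delta_neg (fun x => x = 0) _ _ (by omega),
          proj1_delta_neg (fun x => 1 ≤ x) _ _ (by omega),
          proj1_delta_neg (fun x => x ≤ -2) _ _ (by omega),
          proj1_delta_pos (fun x => x = -1) _ _ (by omega),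
          proj1_delta_neg (fun x => 0 ≤ x) _ _ (by omega),
          Emul_delta, Emul_delta, Emul_zero, Emul_zero, Emul_zero, Emul_zero,
          show n + -1 = n - 1 from by omega, show m + 0 = m from by omega]
        abel
      · -- n ≤ -2
        refine ⟨m + 1, m - 1, ?_⟩
        rw [proj1_delta_pos (fun x => x ≤ -1) _ _ (by omega),
          proj1_delta_neg (fun x => x = 0) _ _ (by omega),
          proj1_delta_neg (fun x => 1 ≤ x) _ _ (by omega),
          proj1_delta_pos (fun x => x ≤ -2) _ _ (by omega),
          proj1_delta_neg (fun x => x = -1) _ _ (by omega),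
          proj1_delta_neg (fun x => 0 ≤ x) _ _ (by omega),
          Emul_delta, Emul_delta, Emul_zero, Emul_zero, Emul_zero, Emul_zero,
          show n + -1 = n - 1 from by omega, show m + -1 = m - 1 from by omega]
        abel
    · -- n = 0
      subst hn
      refine ⟨m, m + 1, ?_⟩
      rw [proj1_delta_neg (fun x => x ≤ -1) _ _ (by omega),
        proj1_delta_pos (fun x => x = 0) _ _ (by omega),
        proj1_delta_neg (fun x => 1 ≤ x) _ _ (by omega),
        proj1_delta_neg (fun x => x ≤ -2) _ _ (by omega),
        proj1_delta_neg (fun x => x = -1) _ _ (by omega),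
        proj1_delta_pos (fun x => 0 ≤ x) _ _ (by omega),
        Emul_delta, Emul_delta, Emul_zero, Emul_zero, Emul_zero, Emul_zero,
        show (0:ℤ) + -1 = 0 - 1 from by omega, show m + 0 = m from by omega]
      abel
    · -- n ≥ 1
      refine ⟨m - 1, m + 1, ?_⟩
      rw [proj1_delta_neg (fun x => x ≤ -1) _ _ (by omega),
        proj1_delta_neg (fun x => x = 0) _ _ (by omega),
        proj1_delta_pos (fun x => 1 ≤ x) _ _ (by omega),
        proj1_delta_neg (fun x => x ≤ -2) _ _ (by omega),
        proj1_delta_neg (fun x => x = -1) _ _ (by omega),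
        proj1_delta_pos (fun x => 0 ≤ x) _ _ (by omega),
        Emul_delta, Emul_delta, Emul_zero, Emul_zero, Emul_zero, Emul_zero,
        show n + -1 = n - 1 from by omega, show m + -1 = m - 1 from by omega]
      abel
lemma kin_delta_pos (C q : ℝ) (n m : ℤ) (h : 0 ≤ m) :
    kinS1 C q (cdelta n m) = ((1 / (2 * C) * (2 * (n : ℝ) + q) ^ 2 : ℝ) : ℂ) • cdelta n m := by
  funext p
  by_cases hp : p = (n, m)
  · subst hp
    simp only [kinS1, cdelta, Pi.smul_apply, smul_eq_mul, if_pos rfl]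
    rw [if_pos (by exact_mod_cast h : (0:ℤ) ≤ (n, m).2)]
  · simp only [kinS1, cdelta, Pi.smul_apply, smul_eq_mul, if_neg hp]
    split <;> simp

lemma kin_delta_neg (C q : ℝ) (n m : ℤ) (h : m ≤ -1) :
    kinS1 C q (cdelta n m)
      = ((1 / (2 * C) * (2 * (n : ℝ) + 1 + q) ^ 2 : ℝ) : ℂ) • cdelta n m := by
  funext p
  by_cases hp : p = (n, m)
  · subst hp
    simp only [kinS1, cdelta, Pi.smul_apply, smul_eq_mul, if_pos rfl]
    rw [if_neg (by omega : ¬ ((0:ℤ) ≤ (n, m).2))]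
  · simp only [kinS1, cdelta, Pi.smul_apply, smul_eq_mul, if_neg hp]
    split <;> simp

/-- The Mathieu-operator term produced by one basis vector of frequency `g`. -/
def Pterm (C α : ℝ) (g : ℤ) (θ : ℝ) : ℂ :=
  2 * (g : ℂ) ^ 2 / (C : ℂ) * Cexp g θ
    - (α : ℂ) * (Cexp (g - 1) θ + Cexp (g + 1) θ)

lemma ham_delta_realize (C q α : ℝ) (n m : ℤ) (hm : 1 ≤ m ∨ m ≤ -2) (coef : ℝ)
    (hcoef : kinS1 C q (cdelta n m) = ((coef : ℝ) : ℂ) • cdelta n m) (θ : ℝ) :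
    realize (hamS1 C q α (cdelta n m)) θ 0
      = (coef : ℂ) * Cexp n θ - (α : ℂ) * (Cexp (n - 1) θ + Cexp (n + 1) θ) := by
  obtain ⟨m1, m2, ht⟩ := tunnel_delta_cases n m hm
  rw [hamS1, hcoef, ht,
    realize_sub (FS_smul _ (FS_cdelta _ _))
      (FS_smul _ (FS_add (FS_cdelta _ _) (FS_cdelta _ _))),
    realize_smul, realize_smul, realize_add (FS_cdelta _ _) (FS_cdelta _ _),
    realize_cdelta0, realize_cdelta0, realize_cdelta0]

lemma FS_ham_delta (C q α : ℝ) (n m : ℤ) (hm : 1 ≤ m ∨ m ≤ -2) :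
    FS (hamS1 C q α (cdelta n m)) := by
  obtain ⟨m1, m2, ht⟩ := tunnel_delta_cases n m hm
  rw [hamS1, ht]
  rcases le_or_gt 0 m with h | h
  · rw [kin_delta_pos C q n m h]
    exact FS_sub (FS_smul _ (FS_cdelta _ _))
      (FS_smul _ (FS_add (FS_cdelta _ _) (FS_cdelta _ _)))
  · rw [kin_delta_neg C q n m (by omega)]
    exact FS_sub (FS_smul _ (FS_cdelta _ _))
      (FS_smul _ (FS_add (FS_cdelta _ _) (FS_cdelta _ _)))

lemma basis_even (C α : ℝ) (hC : C ≠ 0) (n m : ℤ) (hm : 1 ≤ m) (θ : ℝ) :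
    realize (hamS1 C 0 α (cdelta n m)) θ 0 = Pterm C α n θ := by
  rw [ham_delta_realize C 0 α n m (Or.inl hm) (1 / (2 * C) * (2 * (n : ℝ) + 0) ^ 2)
    (kin_delta_pos C 0 n m (by omega)) θ, Pterm]
  congr 1
  push_cast
  field_simp
  ring

lemma basis_odd (C α : ℝ) (hC : C ≠ 0) (n m : ℤ) (hm : m ≤ -2) (θ : ℝ) :
    realize (hamS1 C (-1) α (cdelta n m)) θ 0 = Pterm C α n θ := by
  rw [ham_delta_realize C (-1) α n m (Or.inr hm) (1 / (2 * C) * (2 * (n : ℝ) + 1 + (-1)) ^ 2)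
    (kin_delta_neg C (-1) n m (by omega)) θ, Pterm]
  congr 1
  push_cast
  field_simp
  ring
lemma Mop_sum {ι : Type*} (s : Finset ι) (b : ι → ℂ) (g : ι → ℤ) :
    Mop (fun t : ℝ => ∑ i ∈ s, b i * Cexp (g i) t)
      = fun t : ℝ => ∑ i ∈ s, ((g i : ℂ) * b i) * Cexp (g i) t := by
  funext t
  have hd : HasDerivAt (fun t : ℝ => ∑ i ∈ s, b i * Cexp (g i) t)
      (∑ i ∈ s, b i * (Complex.I * (g i : ℂ) * Cexp (g i) t)) t := by
    apply HasDerivAt.fun_sum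
    intro i _
    have h1 : HasDerivAt (fun z : ℂ => Complex.exp (Complex.I * (g i : ℂ) * z))
        (Complex.I * (g i : ℂ) * Complex.exp (Complex.I * (g i : ℂ) * (t : ℂ))) (t : ℂ) := by
      simpa [mul_comm] using
        ((hasDerivAt_id ((t : ℝ) : ℂ)).const_mul (Complex.I * (g i : ℂ))).cexp
    have h2 := h1.comp_ofReal
    simpa [Cexp] using h2.const_mul (b i)
  rw [Mop, hd.deriv, Finset.mul_sum]
  apply Finset.sum_congr rfl
  intro i _
  have hI : -Complex.I * Complex.I = 1 := by
    rw [neg_mul, Complex.I_mul_I, neg_neg]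
  calc -Complex.I * (b i * (Complex.I * (g i : ℂ) * Cexp (g i) t))
      = (-Complex.I * Complex.I) * ((g i : ℂ) * b i * Cexp (g i) t) := by ring
    _ = (g i : ℂ) * b i * Cexp (g i) t := by rw [hI, one_mul]

lemma two_cos_mul (g : ℤ) (θ : ℝ) :
    2 * Complex.cos (θ : ℂ) * Cexp g θ = Cexp (g - 1) θ + Cexp (g + 1) θ := by
  have h := Complex.two_cos (θ : ℂ)
  simp only [Cexp]
  push_cast
  rw [show Complex.I * ((g : ℂ) - 1) * (θ : ℂ)
      = Complex.I * (g : ℂ) * (θ : ℂ) + -(θ : ℂ) * Complex.I from by ring,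
    show Complex.I * ((g : ℂ) + 1) * (θ : ℂ)
      = Complex.I * (g : ℂ) * (θ : ℂ) + (θ : ℂ) * Complex.I from by ring,
    Complex.exp_add, Complex.exp_add]
  rw [show (2 : ℂ) * Complex.cos (θ : ℂ) * Complex.exp (Complex.I * (g : ℂ) * (θ : ℂ))
      = (2 * Complex.cos (θ : ℂ)) * Complex.exp (Complex.I * (g : ℂ) * (θ : ℂ)) from by ring,
    h]
  ring

lemma master {ι : Type*} (C α : ℝ) (θ : ℝ) (s : Finset ι) (b : ι → ℂ) (g : ι → ℤ)
    (f : ℝ → ℂ) (hf : f = fun t : ℝ => ∑ i ∈ s, b i * Cexp (g i) t) :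
    ∑ i ∈ s, b i * Pterm C α (g i) θ
      = ((2 / C : ℝ) : ℂ) * Mop (Mop f) θ
        - 2 * (α : ℂ) * Complex.cos (θ : ℂ) * f θ := by
  rw [hf, Mop_sum, Mop_sum]
  simp only [Finset.mul_sum]
  rw [← Finset.sum_sub_distrib]
  apply Finset.sum_congr rfl
  intro i _
  rw [Pterm]
  rw [show 2 * (α : ℂ) * Complex.cos (θ : ℂ) * (b i * Cexp (g i) θ)
      = (α : ℂ) * b i * (2 * Complex.cos (θ : ℂ) * Cexp (g i) θ) from by ring,
    two_cos_mul]
  push_cast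
  ring

/-- on the fibers the restriction of `H_{S¹}` to `θ₂ = 0` is
the Mathieu operator `(2/C)(−i d/dθ)² − 2α cos θ`, for `q = 0` in the even case
and for `q = −1` in the odd case. -/
theorem stmt15 (C α : ℝ) (hC : C ≠ 0) :
    (∀ k : ℤ, 2 ≤ k → ∀ (a0 : ℂ) (ap am : ℤ → ℂ) (θ : ℝ),
      realize (hamS1 C 0 α (evenPsi k a0 ap am)) θ 0
        = ((2 / C : ℝ) : ℂ) * Mop (Mop (fun t => realize (evenPsi k a0 ap am) t 0)) θ
          - 2 * (α : ℂ) * Complex.cos (θ : ℂ) * realize (evenPsi k a0 ap am) θ 0) ∧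
    (∀ k : ℤ, 2 ≤ k → ∀ (ap am : ℤ → ℂ) (θ : ℝ),
      realize (hamS1 C (-1) α (oddPsi k ap am)) θ 0
        = ((2 / C : ℝ) : ℂ) * Mop (Mop (fun t => realize (oddPsi k ap am) t 0)) θ
          - 2 * (α : ℂ) * Complex.cos (θ : ℂ) * realize (oddPsi k ap am) θ 0) := by
  constructor
  · -- even case
    intro k hk a0 ap am θ
    set s : Finset ((ℤ ⊕ ℤ) ⊕ ℤ) :=
      ((Finset.Icc (1:ℤ) (k-1)).disjSum (Finset.Icc (1:ℤ) (k-1))).disjSum ({0} : Finset ℤ)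
      with hs
    set b : (ℤ ⊕ ℤ) ⊕ ℤ → ℂ := Sum.elim (Sum.elim ap am) (fun _ => a0) with hb
    set g : (ℤ ⊕ ℤ) ⊕ ℤ → ℤ := Sum.elim (Sum.elim id (fun n => -n)) (fun _ => 0) with hg
    have h2 : ∀ t : ℝ, realize (evenPsi k a0 ap am) t 0 = ∑ i ∈ s, b i * Cexp (g i) t := by
      intro t
      rw [hs, Finset.sum_disjSum, Finset.sum_disjSum, Finset.sum_singleton]
      have fs1 : FS (∑ n ∈ Finset.Icc (1:ℤ) (k-1), ap n • cdelta n (k - n)) :=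
        FS_sum _ _ fun n _ => FS_smul _ (FS_cdelta _ _)
      have fs2 : FS (∑ n ∈ Finset.Icc (1:ℤ) (k-1), am n • cdelta (-n) (k - n)) :=
        FS_sum _ _ fun n _ => FS_smul _ (FS_cdelta _ _)
      rw [evenPsi, realize_add (FS_add fs1 fs2) (FS_smul _ (FS_cdelta _ _)),
        realize_add fs1 fs2, realize_smul, realize_cdelta0,
        realize_sum _ _ (fun n _ => FS_smul _ (FS_cdelta _ _)),
        realize_sum _ _ (fun n _ => FS_smul _ (FS_cdelta _ _))]
      simp only [hb, hg, Sum.elim_inl, Sum.elim_inr, id_eq]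
      congr 1
      · congr 1
        · exact Finset.sum_congr rfl fun n _ => by rw [realize_smul, realize_cdelta0]
        · exact Finset.sum_congr rfl fun n _ => by rw [realize_smul, realize_cdelta0]
    have h1 : realize (hamS1 C 0 α (evenPsi k a0 ap am)) θ 0
        = ∑ i ∈ s, b i * Pterm C α (g i) θ := by
      rw [hs, Finset.sum_disjSum, Finset.sum_disjSum, Finset.sum_singleton]
      have fs1 : FS (∑ n ∈ Finset.Icc (1:ℤ) (k-1), hamS1 C 0 α (ap n • cdelta n (k - n))) :=
        FS_sum _ _ fun n hn => by
          rw [ham_smul]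
          exact FS_smul _ (FS_ham_delta _ _ _ _ _
            (Or.inl (by rw [Finset.mem_Icc] at hn; omega)))
      have fs2 : FS (∑ n ∈ Finset.Icc (1:ℤ) (k-1), hamS1 C 0 α (am n • cdelta (-n) (k - n))) :=
        FS_sum _ _ fun n hn => by
          rw [ham_smul]
          exact FS_smul _ (FS_ham_delta _ _ _ _ _
            (Or.inl (by rw [Finset.mem_Icc] at hn; omega)))
      rw [evenPsi, ham_add, ham_add, ham_sum, ham_sum,
        realize_add (FS_add fs1 fs2)
          (by rw [ham_smul]
              exact FS_smul _ (FS_ham_delta _ _ _ _ _ (Or.inl (by omega)))),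
        realize_add fs1 fs2,
        realize_sum _ _ (fun n hn => by
          rw [ham_smul]
          exact FS_smul _ (FS_ham_delta _ _ _ _ _
            (Or.inl (by rw [Finset.mem_Icc] at hn; omega)))),
        realize_sum _ _ (fun n hn => by
          rw [ham_smul]
          exact FS_smul _ (FS_ham_delta _ _ _ _ _
            (Or.inl (by rw [Finset.mem_Icc] at hn; omega))))]
      simp only [hb, hg, Sum.elim_inl, Sum.elim_inr, id_eq]
      congr 1
      · congr 1
        · refine Finset.sum_congr rfl fun n hn => ?_
          rw [Finset.mem_Icc] at hn
          rw [ham_smul, realize_smul, basis_even C α hC n (k - n) (by omega)]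
        · refine Finset.sum_congr rfl fun n hn => ?_
          rw [Finset.mem_Icc] at hn
          rw [ham_smul, realize_smul, basis_even C α hC (-n) (k - n) (by omega)]
      · rw [ham_smul, realize_smul, basis_even C α hC 0 k (by omega)]
    rw [h1]
    exact master C α θ s b g _ (funext h2)
  · -- odd case
    intro k hk ap am θ
    set s : Finset (ℤ ⊕ ℤ) :=
      (Finset.Icc (0:ℤ) (k-2)).disjSum (Finset.Icc (0:ℤ) (k-2)) with hs
    set b : ℤ ⊕ ℤ → ℂ := Sum.elim ap am with hb
    set g : ℤ ⊕ ℤ → ℤ := Sum.elim id (fun n => -(n+1)) with hg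
    have h2 : ∀ t : ℝ, realize (oddPsi k ap am) t 0 = ∑ i ∈ s, b i * Cexp (g i) t := by
      intro t
      rw [hs, Finset.sum_disjSum]
      rw [oddPsi, realize_sum _ _ (fun n _ =>
        FS_add (FS_smul _ (FS_cdelta _ _)) (FS_smul _ (FS_cdelta _ _)))]
      simp only [hb, hg, Sum.elim_inl, Sum.elim_inr, id_eq]
      rw [← Finset.sum_add_distrib]
      refine Finset.sum_congr rfl fun n _ => ?_
      rw [realize_add (FS_smul _ (FS_cdelta _ _)) (FS_smul _ (FS_cdelta _ _)),
        realize_smul, realize_smul, realize_cdelta0, realize_cdelta0]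
    have h1 : realize (hamS1 C (-1) α (oddPsi k ap am)) θ 0
        = ∑ i ∈ s, b i * Pterm C α (g i) θ := by
      rw [hs, Finset.sum_disjSum]
      rw [oddPsi, ham_sum, realize_sum _ _ (fun n hn => by
        rw [Finset.mem_Icc] at hn
        rw [ham_add, ham_smul, ham_smul]
        exact FS_add (FS_smul _ (FS_ham_delta _ _ _ _ _ (Or.inr (by omega))))
          (FS_smul _ (FS_ham_delta _ _ _ _ _ (Or.inr (by omega)))))]
      simp only [hb, hg, Sum.elim_inl, Sum.elim_inr, id_eq]
      rw [← Finset.sum_add_distrib]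
      refine Finset.sum_congr rfl fun n hn => ?_
      rw [Finset.mem_Icc] at hn
      rw [ham_add, ham_smul, ham_smul,
        realize_add (FS_smul _ (FS_ham_delta _ _ _ _ _ (Or.inr (by omega))))
          (FS_smul _ (FS_ham_delta _ _ _ _ _ (Or.inr (by omega)))),
        realize_smul, realize_smul,
        basis_odd C α hC n (n - k) (by omega),
        basis_odd C α hC (-(n+1)) (n - k) (by omega)]
    rw [h1]
    exact master C α θ s b g _ (funext h2)
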